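/- Let G_n = K_n^{⊗ n²} and p_n = (1 − 1/n)^{n²}. Then for every finite simple graph F with t triangles, the normalized homomorphism density t_{p_n}(F, G_n) = hom(F, G_n) / (p_n^{e(F)} |G_n|^{|F|}) converges to e^{−t} as n → ∞. -/

import Mathlib

open Filter

/-- The `m`-th tensor power of the complete graph `K_n`. -/
def tensorPow (n m : ℕ) : SimpleGraph (Fin m → Fin n) where
  Adj x y := x ≠ y ∧ ∀ i, x i ≠ y i
  symm := ⟨fun x y h => ⟨h.1.symm, fun i => (h.2 i).symm⟩⟩
  loopless := ⟨fun x h => h.1 rfl⟩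

/-- The number of graph homomorphisms from `F` to `G`. -/
noncomputable def homCount {α β : Type*} (F : SimpleGraph α) (G : SimpleGraph β) : ℕ :=
  Nat.card (F →g G)

section NDTwork

open Finset Topology

set_option linter.unusedSectionVars false

variable {V : Type*} [Fintype V] [DecidableEq V]


/-- `f` is constant on the unordered pair `e`. -/
def Cst {n : ℕ} (f : V → Fin n) (e : Sym2 V) : Prop := ∀ x ∈ e, ∀ y ∈ e, f x = f y

instance {n : ℕ} (f : V → Fin n) (e : Sym2 V) : Decidable (Cst f e) := by
  unfold Cst; infer_instance

lemma cst_iff {n : ℕ} (f : V → Fin n) (a b : V) : Cst f s(a, b) ↔ f a = f b := by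
  constructor
  · intro h; exact h a (Sym2.mem_mk_left a b) b (Sym2.mem_mk_right a b)
  · intro h x hx y hy
    rcases Sym2.mem_iff.1 hx with rfl | rfl <;> rcases Sym2.mem_iff.1 hy with rfl | rfl
    exacts [rfl, h, h.symm, rfl]

/-- number of maps `V → Fin n` constant on each pair in `S`. -/
def Mc (n : ℕ) (S : Finset (Sym2 V)) : ℕ :=
  Fintype.card {f : V → Fin n // ∀ e ∈ S, Cst f e}

lemma Mc_empty (n : ℕ) : Mc (V := V) n ∅ = n ^ Fintype.card V := by
  rw [Mc]
  rw [Fintype.card_congr (Equiv.subtypeUnivEquiv (by simp))]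
  simp [Fintype.card_fun]

lemma card_ne_one (b : V) : Fintype.card {x : V // x ≠ b} = Fintype.card V - 1 := by
  rw [Fintype.card_subtype_compl, Fintype.card_subtype_eq]

lemma Mc_single (n : ℕ) {a b : V} (hab : a ≠ b) :
    Mc n {s(a, b)} = n ^ (Fintype.card V - 1) := by
  rw [Mc]
  have e : {f : V → Fin n // ∀ e ∈ ({s(a,b)} : Finset (Sym2 V)), Cst f e} ≃
      ({x : V // x ≠ b} → Fin n) := by
    refine ⟨fun F x => F.1 x.1, fun g => ⟨fun x => if h : x = b then g ⟨a, hab⟩ else g ⟨x, h⟩, ?_⟩,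
      ?_, ?_⟩
    · intro e he
      simp only [Finset.mem_singleton] at he; subst he
      rw [cst_iff]
      simp [hab]
    · intro F
      apply Subtype.ext
      funext x
      simp only
      split_ifs with h
      · rw [h]
        exact (cst_iff F.1 a b).1 (F.2 _ (Finset.mem_singleton_self _))
      · rfl
    · intro g
      funext x
      simp [x.2.symm, x.2]
  rw [Fintype.card_congr e]
  rw [Fintype.card_fun, card_ne_one, Fintype.card_fin]

lemma card_ne_two {b1 b2 : V} (h : b1 ≠ b2) :
    Fintype.card {x : V // x ≠ b1 ∧ x ≠ b2} = Fintype.card V - 2 := by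
  have : Fintype.card {x : V // x ≠ b1 ∧ x ≠ b2} =
      Fintype.card {x : V // ¬(x = b1 ∨ x = b2)} :=
    Fintype.card_congr (Equiv.subtypeEquivRight (by intro x; rw [not_or]))
  rw [this, Fintype.card_subtype_compl]
  congr 1
  rw [Fintype.card_subtype]
  have : Finset.filter (fun x => x = b1 ∨ x = b2) Finset.univ = {b1, b2} := by
    ext x; simp
  rw [this, Finset.card_insert_of_notMem (by simpa using h), Finset.card_singleton]

lemma Mc_pair (n : ℕ) {a1 b1 a2 b2 : V} (hb : b1 ≠ b2) (h11 : a1 ≠ b1) (h12 : a1 ≠ b2)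
    (h22 : a2 ≠ b2) :
    Mc n {s(a1, b1), s(a2, b2)} = n ^ (Fintype.card V - 2) := by
  rw [Mc]
  have key : ∀ f : V → Fin n,
      (∀ e ∈ ({s(a1,b1), s(a2,b2)} : Finset (Sym2 V)), Cst f e) ↔
        (f a1 = f b1 ∧ f a2 = f b2) := by
    intro f
    constructor
    · intro h
      exact ⟨(cst_iff f a1 b1).1 (h _ (by simp)), (cst_iff f a2 b2).1 (h _ (by simp))⟩
    · rintro ⟨h1, h2⟩ e he
      rcases Finset.mem_insert.1 he with rfl | he
      · exact (cst_iff f a1 b1).2 h1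
      · rw [Finset.mem_singleton] at he; subst he
        exact (cst_iff f a2 b2).2 h2
  have e : {f : V → Fin n // ∀ e ∈ ({s(a1,b1), s(a2,b2)} : Finset (Sym2 V)), Cst f e} ≃
      ({x : V // x ≠ b1 ∧ x ≠ b2} → Fin n) := by
    refine ⟨fun F x => F.1 x.1,
      fun g => ⟨fun x => if h : x = b1 then g ⟨a1, h11, h12⟩ else
        if h' : x = b2 then (if h2 : a2 = b1 then g ⟨a1, h11, h12⟩ else g ⟨a2, h2, h22⟩)
        else g ⟨x, h, h'⟩, ?_⟩, ?_, ?_⟩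
    · rw [key]
      constructor
      · simp [h11, h12, hb.symm]
      · by_cases h2 : a2 = b1 <;> simp [h2, h22, hb.symm, h11, h12]
    · intro F
      apply Subtype.ext
      funext x
      obtain ⟨h1, h2⟩ := (key F.1).1 F.2
      simp only
      split_ifs with h h' h''
      · rw [h]; exact h1
      · rw [h', ← h2]; exact h1.trans (congrArg F.1 h''.symm)
      · rw [h']; exact h2
      · rfl
    · intro g
      funext x
      obtain ⟨x, hx1, hx2⟩ := x
      simp [hx1, hx2]
  rw [Fintype.card_congr e, Fintype.card_fun, card_ne_two hb, Fintype.card_fin]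

lemma card_ne_three {b1 b2 b3 : V} (h12 : b1 ≠ b2) (h13 : b1 ≠ b3) (h23 : b2 ≠ b3) :
    Fintype.card {x : V // x ≠ b1 ∧ x ≠ b2 ∧ x ≠ b3} = Fintype.card V - 3 := by
  have : Fintype.card {x : V // x ≠ b1 ∧ x ≠ b2 ∧ x ≠ b3} =
      Fintype.card {x : V // ¬(x = b1 ∨ x = b2 ∨ x = b3)} :=
    Fintype.card_congr (Equiv.subtypeEquivRight (by intro x; rw [not_or, not_or]))
  rw [this, Fintype.card_subtype_compl]
  congr 1
  rw [Fintype.card_subtype]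
  have : Finset.filter (fun x => x = b1 ∨ x = b2 ∨ x = b3) Finset.univ = {b1, b2, b3} := by
    ext x; simp
  rw [this]
  rw [Finset.card_insert_of_notMem (by simp [h12, h13]),
    Finset.card_insert_of_notMem (by simpa using h23), Finset.card_singleton]

lemma Mc_le_three (n : ℕ) {S : Finset (Sym2 V)} {a1 b1 a2 b2 a3 b3 : V}
    (hS1 : s(a1, b1) ∈ S) (hS2 : s(a2, b2) ∈ S) (hS3 : s(a3, b3) ∈ S)
    (hb12 : b1 ≠ b2) (hb13 : b1 ≠ b3) (hb23 : b2 ≠ b3)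
    (h11 : a1 ≠ b1) (h12 : a1 ≠ b2) (h13 : a1 ≠ b3)
    (h22 : a2 ≠ b2) (h23 : a2 ≠ b3) (h33 : a3 ≠ b3) :
    Mc n S ≤ n ^ (Fintype.card V - 3) := by
  rw [Mc]
  have : n ^ (Fintype.card V - 3) =
      Fintype.card ({x : V // x ≠ b1 ∧ x ≠ b2 ∧ x ≠ b3} → Fin n) := by
    rw [Fintype.card_fun, card_ne_three hb12 hb13 hb23]; simp
  rw [this]
  apply Fintype.card_le_of_injective (fun F x => F.1 x.1)
  intro F G hFG
  have hval : ∀ x : V, x ≠ b1 → x ≠ b2 → x ≠ b3 → F.1 x = G.1 x := by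
    intro x hx1 hx2 hx3
    exact congrFun hFG ⟨x, hx1, hx2, hx3⟩
  have c1F := (cst_iff F.1 a1 b1).1 (F.2 _ hS1)
  have c1G := (cst_iff G.1 a1 b1).1 (G.2 _ hS1)
  have c2F := (cst_iff F.1 a2 b2).1 (F.2 _ hS2)
  have c2G := (cst_iff G.1 a2 b2).1 (G.2 _ hS2)
  have c3F := (cst_iff F.1 a3 b3).1 (F.2 _ hS3)
  have c3G := (cst_iff G.1 a3 b3).1 (G.2 _ hS3)
  have hb1 : F.1 b1 = G.1 b1 := by
    rw [← c1F, ← c1G, hval a1 h11 h12 h13]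
  have hb2 : F.1 b2 = G.1 b2 := by
    rw [← c2F, ← c2G]
    by_cases h : a2 = b1
    · subst h; exact hb1
    · exact hval a2 h h22 h23
  have hb3 : F.1 b3 = G.1 b3 := by
    rw [← c3F, ← c3G]
    by_cases h : a3 = b1
    · subst h; exact hb1
    by_cases h' : a3 = b2
    · subst h'; exact hb2
    · exact hval a3 h h' h33
  apply Subtype.ext
  funext x
  by_cases h : x = b1
  · subst h; exact hb1
  by_cases h' : x = b2
  · subst h'; exact hb2
  by_cases h'' : x = b3
  · subst h''; exact hb3
  · exact hval x h h' h''

/-- The edge set of a triangle. -/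
def IsTri (S : Finset (Sym2 V)) : Prop :=
  ∃ a b c : V, a ≠ b ∧ a ≠ c ∧ b ≠ c ∧ S = {s(a, b), s(a, c), s(b, c)}

instance : DecidablePred (IsTri (V := V)) := fun S => by unfold IsTri; infer_instance

/-- An elimination system of size three inside `S`. -/
def HasElim (S : Finset (Sym2 V)) : Prop :=
  ∃ a1 b1 a2 b2 a3 b3 : V, s(a1, b1) ∈ S ∧ s(a2, b2) ∈ S ∧ s(a3, b3) ∈ S ∧
    b1 ≠ b2 ∧ b1 ≠ b3 ∧ b2 ≠ b3 ∧ a1 ≠ b1 ∧ a1 ≠ b2 ∧ a1 ≠ b3 ∧ a2 ≠ b2 ∧ a2 ≠ b3 ∧ a3 ≠ b3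

omit [Fintype V] [DecidableEq V] in
lemma sym2_rep (e : Sym2 V) : ∃ a b : V, e = s(a, b) := by
  induction e using Sym2.ind with
  | _ a b => exact ⟨a, b, rfl⟩

omit [Fintype V] [DecidableEq V] in
lemma leaf2 {e1 e2 : Sym2 V} (hne : e1 ≠ e2) (hnd : ¬ e2.IsDiag) :
    ∃ c d : V, e2 = s(c, d) ∧ c ≠ d ∧ d ∉ e1 := by
  obtain ⟨x, y, rfl⟩ := sym2_rep e2
  have hxy : x ≠ y := by simpa [Sym2.isDiag_iff_proj_eq] using hnd
  by_cases hy : y ∈ e1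
  · by_cases hx : x ∈ e1
    · exact absurd ((Sym2.mem_and_mem_iff hxy).1 ⟨hx, hy⟩) hne
    · exact ⟨y, x, Sym2.eq_swap, hxy.symm, hx⟩
  · exact ⟨x, y, rfl, hxy, hy⟩

omit [Fintype V] [DecidableEq V] in
lemma elim_of_priv {S : Finset (Sym2 V)} {e1 e2 e3 : Sym2 V}
    (h1 : e1 ∈ S) (h2 : e2 ∈ S) (h3 : e3 ∈ S)
    (nd1 : ¬e1.IsDiag) (nd2 : ¬e2.IsDiag) (nd3 : ¬e3.IsDiag)
    (hne12 : e1 ≠ e2) {x : V} (hx3 : x ∈ e3) (hx1 : x ∉ e1) (hx2 : x ∉ e2) :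
    HasElim S := by
  obtain ⟨a3, he3⟩ := Sym2.mem_iff_exists.1 hx3
  have ha3 : a3 ≠ x := by
    intro h; subst h; exact nd3 (by simp [he3, Sym2.isDiag_iff_proj_eq])
  obtain ⟨a2, b2, he2, ha2b2, hb2e1⟩ := leaf2 hne12 nd2
  obtain ⟨a1, b1, he1⟩ := sym2_rep e1
  have ha1b1 : a1 ≠ b1 := by
    intro h; subst h; exact nd1 (by simp [he1, Sym2.isDiag_iff_proj_eq])
  have ha1e1 : a1 ∈ e1 := by rw [he1]; exact Sym2.mem_mk_left _ _
  have hb1e1 : b1 ∈ e1 := by rw [he1]; exact Sym2.mem_mk_right _ _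
  have ha2e2 : a2 ∈ e2 := by rw [he2]; exact Sym2.mem_mk_left _ _
  have hb2e2 : b2 ∈ e2 := by rw [he2]; exact Sym2.mem_mk_right _ _
  refine ⟨a1, b1, a2, b2, a3, x, by rwa [← he1], by rwa [← he2],
    by rw [Sym2.eq_swap, ← he3]; exact h3, ?_, ?_, ?_, ha1b1, ?_, ?_, ha2b2, ?_, ha3⟩
  · intro h; subst h; exact hb2e1 hb1e1
  · intro h; subst h; exact hx1 hb1e1
  · intro h; subst h; exact hx2 hb2e2
  · intro h; subst h; exact hb2e1 ha1e1
  · intro h; subst h; exact hx1 ha1e1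
  · intro h; subst h; exact hx2 ha2e2

omit [Fintype V] in
lemma tri_mem {S : Finset (Sym2 V)} (h : IsTri S) {a b c : V}
    (hab : a ≠ b) (hac : a ≠ c) (hbc : b ≠ c)
    (h1 : s(a, b) ∈ S) (h2 : s(a, c) ∈ S) : s(b, c) ∈ S := by
  obtain ⟨x, y, z, hxy, hxz, hyz, rfl⟩ := h
  simp only [Finset.mem_insert, Finset.mem_singleton, Sym2.eq_iff] at h1 h2 ⊢
  rcases h1 with (⟨h1a,h1b⟩|⟨h1a,h1b⟩)|(⟨h1a,h1b⟩|⟨h1a,h1b⟩)|(⟨h1a,h1b⟩|⟨h1a,h1b⟩) <;>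
    rcases h2 with (⟨h2a,h2b⟩|⟨h2a,h2b⟩)|(⟨h2a,h2b⟩|⟨h2a,h2b⟩)|(⟨h2a,h2b⟩|⟨h2a,h2b⟩) <;>
    simp_all <;> tauto

omit [Fintype V] in
lemma no_priv_core {e1 e2 e3 : Sym2 V} {a b w : V} (he1 : e1 = s(a, b)) (he2 : e2 = s(a, w))
    (hab : a ≠ b) (hwa : w ≠ a) (hwb : w ≠ b) (hne13 : e1 ≠ e3) (hne23 : e2 ≠ e3)
    (hp3 : ∀ x ∈ e3, x ∈ e1 ∨ x ∈ e2) (nd3 : ¬e3.IsDiag) : IsTri {e1, e2, e3} := by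
  obtain ⟨p, q, he3⟩ := sym2_rep e3
  have hpq : p ≠ q := by
    intro h; subst h; exact nd3 (by simp [he3, Sym2.isDiag_iff_proj_eq])
  have hp : p = a ∨ p = b ∨ p = w := by
    rcases hp3 p (by rw [he3]; exact Sym2.mem_mk_left _ _) with h | h
    · rw [he1, Sym2.mem_iff] at h; tauto
    · rw [he2, Sym2.mem_iff] at h; tauto
  have hq : q = a ∨ q = b ∨ q = w := by
    rcases hp3 q (by rw [he3]; exact Sym2.mem_mk_right _ _) with h | h
    · rw [he1, Sym2.mem_iff] at h; tauto
    · rw [he2, Sym2.mem_iff] at h; tauto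
  have he3' : e3 = s(b, w) := by
    rcases hp with rfl | rfl | rfl <;> rcases hq with h | h | h <;> subst h
    · exact absurd rfl hpq
    · exact absurd (he1.trans (he3.symm)) hne13
    · exact absurd (he2.trans (he3.symm)) hne23
    · exact absurd (he1.trans (Sym2.eq_swap.trans he3.symm)) hne13
    · exact absurd rfl hpq
    · exact he3
    · exact absurd (he2.trans (Sym2.eq_swap.trans he3.symm)) hne23
    · exact he3.trans Sym2.eq_swap
    · exact absurd rfl hpq
  exact ⟨a, b, w, hab, hwa.symm, hwb.symm, by rw [he1, he2, he3']⟩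

omit [Fintype V] in
lemma tri_step {S : Finset (Sym2 V)} (hnd : ∀ e ∈ S, ¬e.IsDiag) {e1 e2 e3 : Sym2 V}
    (h1 : e1 ∈ S) (h2 : e2 ∈ S) (h3 : e3 ∈ S)
    (hne12 : e1 ≠ e2) (hne13 : e1 ≠ e3) (hne23 : e2 ≠ e3)
    (hnt : ¬ IsTri {e1, e2, e3}) : HasElim S := by
  have nd1 := hnd e1 h1; have nd2 := hnd e2 h2; have nd3 := hnd e3 h3
  by_cases hp3 : ∃ x ∈ e3, x ∉ e1 ∧ x ∉ e2
  · obtain ⟨x, hx3, hx1, hx2⟩ := hp3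
    exact elim_of_priv h1 h2 h3 nd1 nd2 nd3 hne12 hx3 hx1 hx2
  by_cases hp2 : ∃ x ∈ e2, x ∉ e1 ∧ x ∉ e3
  · obtain ⟨x, hx2, hx1, hx3⟩ := hp2
    exact elim_of_priv h1 h3 h2 nd1 nd3 nd2 hne13 hx2 hx1 hx3
  by_cases hp1 : ∃ x ∈ e1, x ∉ e2 ∧ x ∉ e3
  · obtain ⟨x, hx1, hx2, hx3⟩ := hp1
    exact elim_of_priv h2 h3 h1 nd2 nd3 nd1 hne23 hx1 hx2 hx3
  exfalso
  push_neg at hp1 hp2 hp3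
  obtain ⟨a, b, he1⟩ := sym2_rep e1
  have hab : a ≠ b := by
    intro h; subst h; exact nd1 (by simp [he1, Sym2.isDiag_iff_proj_eq])
  obtain ⟨c, w, he2, hcw, hwe1⟩ := leaf2 hne12 nd2
  have hwe2 : w ∈ e2 := by rw [he2]; exact Sym2.mem_mk_right _ _
  have hce2 : c ∈ e2 := by rw [he2]; exact Sym2.mem_mk_left _ _
  have hwe3 : w ∈ e3 := hp2 w hwe2 hwe1
  by_cases hce1 : c ∈ e1
  · have hwa : w ≠ a := by rintro rfl; exact hwe1 (by rw [he1]; exact Sym2.mem_mk_left _ _)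
    have hwb : w ≠ b := by rintro rfl; exact hwe1 (by rw [he1]; exact Sym2.mem_mk_right _ _)
    rw [he1, Sym2.mem_iff] at hce1
    have hp3' : ∀ x ∈ e3, x ∈ e1 ∨ x ∈ e2 := by
      intro x hx
      by_cases h : x ∈ e1
      · exact Or.inl h
      · exact Or.inr (hp3 x hx h)
    rcases hce1 with rfl | rfl
    · exact hnt (no_priv_core he1 he2 hab hwa hwb hne13 hne23 hp3' nd3)
    · have : IsTri {e1, e2, e3} :=
        no_priv_core (he1.trans Sym2.eq_swap) he2 hab.symm hwb hwa hne13 hne23 hp3' nd3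
      exact hnt this
  · have hce3 : c ∈ e3 := hp2 c hce2 hce1
    exact hne23 (he2.trans ((Sym2.mem_and_mem_iff hcw).1 ⟨hce3, hwe3⟩).symm)

lemma elim3 {S : Finset (Sym2 V)} (hnd : ∀ e ∈ S, ¬ e.IsDiag) (h3 : 3 ≤ S.card)
    (hnt : ¬ IsTri S) : HasElim S := by
  rcases eq_or_lt_of_le h3 with hc | hc
  · obtain ⟨e1, e2, e3, h12, h13, h23, hS⟩ := Finset.card_eq_three.1 hc.symm
    exact tri_step hnd (by simp [hS]) (by simp [hS]) (by simp [hS]) h12 h13 h23 (hS ▸ hnt)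
  · obtain ⟨T, hTS, hT3⟩ := Finset.exists_subset_card_eq (le_of_lt hc)
    by_cases hTt : IsTri T
    · obtain ⟨a, b, c, hab, hac, hbc, hTeq⟩ := hTt
      have habac : s(a, b) ≠ s(a, c) := by simp [Sym2.eq_iff, hbc, hac, hab.symm]
      have hST : (S \ T).Nonempty := by
        rw [← Finset.card_pos, Finset.card_sdiff_of_subset hTS, hT3]
        omega
      obtain ⟨e4, he4⟩ := hST
      have he4S : e4 ∈ S := (Finset.mem_sdiff.1 he4).1
      have he4T : e4 ∉ T := (Finset.mem_sdiff.1 he4).2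
      have hab_T : s(a, b) ∈ T := by rw [hTeq]; simp
      have hac_T : s(a, c) ∈ T := by rw [hTeq]; simp
      have hbc_T : s(b, c) ∈ T := by rw [hTeq]; simp
      have h14 : s(a, b) ≠ e4 := fun h => he4T (h ▸ hab_T)
      have h24 : s(a, c) ≠ e4 := fun h => he4T (h ▸ hac_T)
      refine tri_step hnd (hTS hab_T) (hTS hac_T) he4S habac h14 h24 ?_
      intro htri
      have := tri_mem htri hab hac hbc (by simp) (by simp [habac])
      simp only [Finset.mem_insert, Finset.mem_singleton] at this
      rcases this with h | h | h
      · exact absurd h (by simp [Sym2.eq_iff, hab.symm, hac.symm])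
      · exact absurd h (by simp [Sym2.eq_iff, hab.symm, hbc])
      · exact he4T (h ▸ hbc_T)
    · obtain ⟨e1, e2, e3, h12, h13, h23, hTe⟩ := Finset.card_eq_three.1 hT3
      exact tri_step hnd (hTS (by simp [hTe])) (hTS (by simp [hTe])) (hTS (by simp [hTe]))
        h12 h13 h23 (hTe ▸ hTt)
lemma Mc_isTri (n : ℕ) {S : Finset (Sym2 V)} (h : IsTri S) :
    S.card = 3 ∧ Mc n S = n ^ (Fintype.card V - 2) ∧ 2 ≤ Fintype.card V := by
  obtain ⟨a, b, c, hab, hac, hbc, rfl⟩ := h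
  have e12 : s(a, b) ≠ s(a, c) := by rw [Ne, Sym2.eq_iff]; tauto
  have e13 : s(a, b) ≠ s(b, c) := by rw [Ne, Sym2.eq_iff]; tauto
  have e23 : s(a, c) ≠ s(b, c) := by rw [Ne, Sym2.eq_iff]; tauto
  refine ⟨?_, ?_, ?_⟩
  · rw [Finset.card_insert_of_notMem (by simp [e12, e13]),
      Finset.card_insert_of_notMem (by simpa using e23), Finset.card_singleton]
  · have hcongr : Mc n {s(a, b), s(a, c), s(b, c)} = Mc n {s(a, b), s(a, c)} := by
      apply Fintype.card_congr
      apply Equiv.subtypeEquivRight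
      intro f
      constructor
      · intro h e he
        apply h
        rcases Finset.mem_insert.1 he with rfl | he
        · simp
        · rw [Finset.mem_singleton] at he; simp [he]
      · intro h e he
        simp only [Finset.mem_insert, Finset.mem_singleton] at he
        rcases he with rfl | rfl | rfl
        · exact h _ (by simp)
        · exact h _ (by simp)
        · have h1 := (cst_iff f a b).1 (h _ (by simp))
          have h2 := (cst_iff f a c).1 (h _ (by simp))
          exact (cst_iff f b c).2 (h1.symm.trans h2)
    rw [hcongr]
    exact Mc_pair n hbc hab hac hac
  · calc 2 = ({a, b} : Finset V).card := by
            rw [Finset.card_insert_of_notMem (by simpa using hab), Finset.card_singleton]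
      _ ≤ Finset.univ.card := Finset.card_le_univ _
      _ = Fintype.card V := Finset.card_univ

variable (F : SimpleGraph V) [DecidableRel F.Adj]

lemma toW_eq {a b c : V} :
    Finset.univ.filter (fun v => ∃ e ∈ ({s(a,b), s(a,c), s(b,c)} : Finset (Sym2 V)), v ∈ e)
      = {a, b, c} := by
  ext x
  simp only [Finset.mem_filter, Finset.mem_univ, true_and, Finset.mem_insert,
    Finset.mem_singleton, Sym2.mem_iff]
  constructor
  · rintro ⟨e, (rfl | rfl | rfl), h⟩ <;> rw [Sym2.mem_iff] at h <;> tauto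
  · rintro (h | h | h)
    exacts [⟨s(a,b), by simp, by simp [h]⟩, ⟨s(a,b), by simp, by simp [h]⟩,
      ⟨s(b,c), by simp, by simp [h]⟩]

lemma toS_eq {a b c : V} (hab : a ≠ b) (hac : a ≠ c) (hbc : b ≠ c) :
    Finset.univ.filter (fun e : Sym2 V => ¬ e.IsDiag ∧ ∀ x ∈ e, x ∈ ({a, b, c} : Finset V)) =
      {s(a,b), s(a,c), s(b,c)} := by
  ext e
  induction e using Sym2.ind with
  | _ x y =>
    simp only [Finset.mem_filter, Finset.mem_univ, true_and, Sym2.isDiag_iff_proj_eq,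
      Sym2.mem_iff, Finset.mem_insert, Finset.mem_singleton, Sym2.eq_iff]
    constructor
    · rintro ⟨hxy, h⟩
      have hx := h x (Or.inl rfl)
      have hy := h y (Or.inr rfl)
      rcases hx with rfl | rfl | rfl <;> rcases hy with rfl | rfl | rfl <;> tauto
    · rintro ((⟨rfl, rfl⟩ | ⟨rfl, rfl⟩) | (⟨rfl, rfl⟩ | ⟨rfl, rfl⟩) |
        (⟨rfl, rfl⟩ | ⟨rfl, rfl⟩)) <;> exact ⟨by tauto, by tauto⟩

lemma card_isTri_filter :
    ((F.edgeFinset.powerset).filter IsTri).card = (F.cliqueFinset 3).card := by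
  refine Finset.card_bij' (fun S _ => Finset.univ.filter (fun v => ∃ e ∈ S, v ∈ e))
    (fun W _ => Finset.univ.filter (fun e : Sym2 V => ¬ e.IsDiag ∧ ∀ x ∈ e, x ∈ W))
    ?_ ?_ ?_ ?_
  · rintro S hS
    rw [Finset.mem_filter] at hS
    obtain ⟨hpow, a, b, c, hab, hac, hbc, rfl⟩ := hS
    rw [toW_eq, SimpleGraph.mem_cliqueFinset_iff, SimpleGraph.is3Clique_triple_iff]
    rw [Finset.mem_powerset] at hpow
    refine ⟨?_, ?_, ?_⟩ <;> rw [← SimpleGraph.mem_edgeSet, ← SimpleGraph.mem_edgeFinset]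
    · exact hpow (by simp)
    · exact hpow (by simp)
    · exact hpow (by simp)
  · rintro W hW
    rw [SimpleGraph.mem_cliqueFinset_iff] at hW
    obtain ⟨a, b, c, hab, hac, hbc, rfl⟩ := Finset.card_eq_three.1 hW.card_eq
    obtain ⟨hadj_ab, hadj_ac, hadj_bc⟩ := SimpleGraph.is3Clique_triple_iff.1 hW
    rw [toS_eq hab hac hbc, Finset.mem_filter, Finset.mem_powerset]
    constructor
    · intro e he
      simp only [Finset.mem_insert, Finset.mem_singleton] at he
      rcases he with rfl | rfl | rfl <;> rw [SimpleGraph.mem_edgeFinset] <;> assumption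
    · exact ⟨a, b, c, hab, hac, hbc, rfl⟩
  · rintro S hS
    rw [Finset.mem_filter] at hS
    obtain ⟨hpow, a, b, c, hab, hac, hbc, rfl⟩ := hS
    rw [toW_eq, toS_eq hab hac hbc]
  · rintro W hW
    rw [SimpleGraph.mem_cliqueFinset_iff] at hW
    obtain ⟨a, b, c, hab, hac, hbc, rfl⟩ := Finset.card_eq_three.1 hW.card_eq
    rw [toS_eq hab hac hbc, toW_eq]

lemma Mc_card_one {S : Finset (Sym2 V)} (hS : S ⊆ F.edgeFinset) (hc : S.card = 1) (n : ℕ) :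
    Mc n S = n ^ (Fintype.card V - 1) ∧ 1 ≤ Fintype.card V := by
  obtain ⟨e, rfl⟩ := Finset.card_eq_one.1 hc
  have nd := SimpleGraph.not_isDiag_of_mem_edgeFinset (hS (Finset.mem_singleton_self e))
  obtain ⟨a, b, rfl⟩ := sym2_rep e
  have hab : a ≠ b := by simpa [Sym2.isDiag_iff_proj_eq] using nd
  exact ⟨Mc_single n hab, Fintype.card_pos_iff.2 ⟨a⟩⟩

lemma Mc_card_two {S : Finset (Sym2 V)} (hS : S ⊆ F.edgeFinset) (hc : S.card = 2) (n : ℕ) :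
    Mc n S = n ^ (Fintype.card V - 2) ∧ 2 ≤ Fintype.card V := by
  obtain ⟨e1, e2, hne, rfl⟩ := Finset.card_eq_two.1 hc
  have nd1 := SimpleGraph.not_isDiag_of_mem_edgeFinset (hS (by simp : e1 ∈ ({e1, e2} : Finset (Sym2 V))))
  have nd2 := SimpleGraph.not_isDiag_of_mem_edgeFinset (hS (by simp : e2 ∈ ({e1, e2} : Finset (Sym2 V))))
  obtain ⟨c, d, he2, hcd, hd⟩ := leaf2 hne nd2
  obtain ⟨a, b, he1⟩ := sym2_rep e1
  have hab : a ≠ b := by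
    intro h; subst h; exact nd1 (by simp [he1, Sym2.isDiag_iff_proj_eq])
  have hbd : b ≠ d := by
    rintro rfl; exact hd (by rw [he1]; exact Sym2.mem_mk_right a b)
  have had : a ≠ d := by
    rintro rfl; exact hd (by rw [he1]; exact Sym2.mem_mk_left a b)
  rw [he1, he2]
  constructor
  · exact Mc_pair n hbd hab had hcd
  · calc 2 = ({a, b} : Finset V).card := by
          rw [Finset.card_insert_of_notMem (by simpa using hab), Finset.card_singleton]
    _ ≤ Finset.univ.card := Finset.card_le_univ _
    _ = Fintype.card V := Finset.card_univ

lemma Mc_big {S : Finset (Sym2 V)} (hS : S ⊆ F.edgeFinset) (hc : 3 ≤ S.card)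
    (hnt : ¬ IsTri S) (n : ℕ) :
    Mc n S ≤ n ^ (Fintype.card V - 3) ∧ 3 ≤ Fintype.card V := by
  have hnd : ∀ e ∈ S, ¬ e.IsDiag := fun e he =>
    SimpleGraph.not_isDiag_of_mem_edgeFinset (hS he)
  obtain ⟨a1, b1, a2, b2, a3, b3, h1, h2, h3, hb12, hb13, hb23,
    h11, h12, h13, h22, h23, h33⟩ := elim3 hnd hc hnt
  constructor
  · exact Mc_le_three n h1 h2 h3 hb12 hb13 hb23 h11 h12 h13 h22 h23 h33
  · calc 3 = ({b1, b2, b3} : Finset V).card := by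
          rw [Finset.card_insert_of_notMem (by simp [hb12, hb13]),
            Finset.card_insert_of_notMem (by simpa using hb23), Finset.card_singleton]
    _ ≤ Finset.univ.card := Finset.card_le_univ _
    _ = Fintype.card V := Finset.card_univ

lemma proper_iff (n : ℕ) (f : V → Fin n) :
    (∀ a b, F.Adj a b → f a ≠ f b) ↔ ∀ e ∈ F.edgeFinset, ¬ Cst f e := by
  constructor
  · intro h e he
    have nd := SimpleGraph.not_isDiag_of_mem_edgeFinset he
    obtain ⟨a, b, rfl⟩ := sym2_rep e
    rw [cst_iff]
    exact h a b (by rwa [← SimpleGraph.mem_edgeSet, ← SimpleGraph.mem_edgeFinset])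
  · intro h a b hadj
    have := h s(a, b) (by rwa [SimpleGraph.mem_edgeFinset, SimpleGraph.mem_edgeSet])
    rwa [cst_iff] at this

/-- The number of proper colorings of `F` with `n` colors. -/
def Ac (n : ℕ) : ℕ := Fintype.card {f : V → Fin n // ∀ a b, F.Adj a b → f a ≠ f b}

lemma boole_prod {n : ℕ} (f : V → Fin n) (S : Finset (Sym2 V)) :
    (∏ e ∈ S, (if Cst f e then (1 : ℝ) else 0)) = if ∀ e ∈ S, Cst f e then 1 else 0 := by
  split_ifs with h
  · exact Finset.prod_eq_one fun e he => by simp [h e he]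
  · push_neg at h
    obtain ⟨e, he, hce⟩ := h
    exact Finset.prod_eq_zero he (by simp [hce])

lemma Mc_eq_sum (n : ℕ) (S : Finset (Sym2 V)) :
    (Mc n S : ℝ) = ∑ f : V → Fin n, (if ∀ e ∈ S, Cst f e then (1 : ℝ) else 0) := by
  rw [Mc, Fintype.card_subtype]
  exact Finset.natCast_card_filter _ _

lemma Ac_eq_sum (n : ℕ) :
    (Ac F n : ℝ) = ∑ S ∈ F.edgeFinset.powerset, (-1 : ℝ) ^ S.card * (Mc n S : ℝ) := by
  have h1 : (Ac F n : ℝ) =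
      ∑ f : V → Fin n, (if ∀ e ∈ F.edgeFinset, ¬ Cst f e then (1 : ℝ) else 0) := by
    rw [Ac, Fintype.card_subtype]
    have : Finset.univ.filter (fun f : V → Fin n => ∀ a b, F.Adj a b → f a ≠ f b) =
        Finset.univ.filter (fun f => ∀ e ∈ F.edgeFinset, ¬ Cst f e) := by
      ext f
      simp only [Finset.mem_filter, Finset.mem_univ, true_and]
      exact proper_iff F n f
    rw [this]
    exact Finset.natCast_card_filter _ _
  have h2 : ∀ f : V → Fin n, (if ∀ e ∈ F.edgeFinset, ¬ Cst f e then (1 : ℝ) else 0)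
      = ∏ e ∈ F.edgeFinset, ((-(if Cst f e then (1 : ℝ) else 0)) + 1) := by
    intro f
    split_ifs with h
    · exact (Finset.prod_eq_one fun e he => by simp [h e he]).symm
    · push_neg at h
      obtain ⟨e, he, hce⟩ := h
      exact (Finset.prod_eq_zero he (by simp [hce])).symm
  rw [h1]
  simp_rw [h2, Finset.prod_add, Finset.prod_const_one, mul_one]
  rw [Finset.sum_comm]
  refine Finset.sum_congr rfl fun S hS => ?_
  rw [Mc_eq_sum, Finset.mul_sum]
  refine Finset.sum_congr rfl fun f _ => ?_
  rw [← boole_prod f S]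
  rw [show (∏ e ∈ S, (-(if Cst f e then (1:ℝ) else 0))) =
    ∏ e ∈ S, ((-1) * (if Cst f e then (1:ℝ) else 0)) from
    Finset.prod_congr rfl fun e _ => (neg_one_mul _).symm]
  rw [Finset.prod_mul_distrib, Finset.prod_const]

lemma key_est (n : ℕ) (hn : 1 ≤ n) :
    |(Ac F n : ℝ) / (n : ℝ) ^ (Fintype.card V) - (1 - 1 / (n : ℝ)) ^ F.edgeFinset.card
        + ((F.cliqueFinset 3).card : ℝ) * ((1 / (n:ℝ)) ^ 2 - (1 / (n:ℝ)) ^ 3)| ≤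
      2 ^ F.edgeFinset.card * 2 * (1 / (n:ℝ)) ^ 3 := by
  have hn0 : (0:ℝ) < (n:ℝ) := by exact_mod_cast hn
  have hn1 : (1:ℝ)/(n:ℝ) ≤ 1 := by
    rw [div_le_one hn0]; exact_mod_cast hn
  set v := Fintype.card V with hv
  have hnv : ((n:ℝ))^v ≠ 0 := pow_ne_zero _ hn0.ne'
  have hratio : ∀ k ≤ v, (n:ℝ) ^ (v - k) / (n:ℝ) ^ v = (1/(n:ℝ)) ^ k := by
    intro k hk
    have hveq : (n:ℝ)^v = (n:ℝ)^(v-k) * (n:ℝ)^k := by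
      rw [← pow_add, Nat.sub_add_cancel hk]
    rw [hveq, div_mul_eq_div_div, div_self (pow_ne_zero _ hn0.ne'), one_div_pow]
  have hbinom : (1 - 1/(n:ℝ)) ^ F.edgeFinset.card =
      ∑ S ∈ F.edgeFinset.powerset, (-1:ℝ) ^ S.card * (1/(n:ℝ)) ^ S.card := by
    have h0 : (1 - 1/(n:ℝ)) ^ F.edgeFinset.card =
        ∏ _e ∈ F.edgeFinset, ((-(1/(n:ℝ))) + 1) := by
      rw [Finset.prod_const]; ring
    rw [h0, Finset.prod_add]
    refine Finset.sum_congr rfl fun S hS => ?_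
    rw [Finset.prod_const_one, mul_one, Finset.prod_const, neg_pow]
  have hdiff : (Ac F n : ℝ) / (n:ℝ)^v - (1 - 1/(n:ℝ)) ^ F.edgeFinset.card =
      ∑ S ∈ F.edgeFinset.powerset,
        (-1:ℝ)^S.card * ((Mc n S : ℝ)/(n:ℝ)^v - (1/(n:ℝ))^S.card) := by
    rw [Ac_eq_sum, hbinom, Finset.sum_div, ← Finset.sum_sub_distrib]
    refine Finset.sum_congr rfl fun S hS => ?_
    rw [mul_sub, mul_div_assoc]
  set P := F.edgeFinset.powerset with hP
  set g : Finset (Sym2 V) → ℝ :=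
    fun S => (-1:ℝ)^S.card * ((Mc n S : ℝ)/(n:ℝ)^v - (1/(n:ℝ))^S.card) with hg
  have hsplit1 : ∑ S ∈ P.filter (fun S => IsTri S), g S
      + ∑ S ∈ P.filter (fun S => ¬ IsTri S), g S = ∑ S ∈ P, g S :=
    Finset.sum_filter_add_sum_filter_not P _ g
  have hsplit2 : ∑ S ∈ (P.filter (fun S => ¬ IsTri S)).filter (fun S => S.card ≤ 2), g S
      + ∑ S ∈ (P.filter (fun S => ¬ IsTri S)).filter (fun S => ¬ S.card ≤ 2), g S
      = ∑ S ∈ P.filter (fun S => ¬ IsTri S), g S :=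
    Finset.sum_filter_add_sum_filter_not _ _ g
  -- the small-card part vanishes
  have hzero : ∑ S ∈ (P.filter (fun S => ¬ IsTri S)).filter (fun S => S.card ≤ 2), g S = 0 := by
    refine Finset.sum_eq_zero fun S hS => ?_
    rw [Finset.mem_filter, Finset.mem_filter, Finset.mem_powerset] at hS
    obtain ⟨⟨hSE, -⟩, hc2⟩ := hS
    have hc : S.card = 0 ∨ S.card = 1 ∨ S.card = 2 := by omega
    rcases hc with hc | hc | hc
    · rw [hg]
      simp only
      rw [Finset.card_eq_zero.1 hc]
      rw [Mc_empty]
      push_cast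
      rw [div_self hnv]
      simp
    · obtain ⟨hMc, hvk⟩ := Mc_card_one F hSE hc n
      rw [hg]
      simp only
      rw [hMc, hc]
      push_cast
      rw [hratio 1 hvk]
      simp
    · obtain ⟨hMc, hvk⟩ := Mc_card_two F hSE hc n
      rw [hg]
      simp only
      rw [hMc, hc]
      push_cast
      rw [hratio 2 hvk]
      simp
  -- the triangle part
  have htri : ∑ S ∈ P.filter (fun S => IsTri S), g S =
      -(((F.cliqueFinset 3).card : ℝ) * ((1/(n:ℝ))^2 - (1/(n:ℝ))^3)) := by
    have hval : ∀ S ∈ P.filter (fun S => IsTri S),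
        g S = -(((1/(n:ℝ))^2 - (1/(n:ℝ))^3)) := by
      intro S hS
      rw [Finset.mem_filter] at hS
      obtain ⟨hc3, hMc, hv2⟩ := Mc_isTri n hS.2
      rw [hg]
      simp only
      rw [hMc, hc3]
      push_cast
      rw [hratio 2 hv2]
      ring
    rw [Finset.sum_congr rfl hval, Finset.sum_const, card_isTri_filter, nsmul_eq_mul]
    ring
  -- the remainder part
  have hrest : |∑ S ∈ (P.filter (fun S => ¬ IsTri S)).filter (fun S => ¬ S.card ≤ 2), g S| ≤
      2 ^ F.edgeFinset.card * 2 * (1/(n:ℝ))^3 := by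
    calc |∑ S ∈ (P.filter (fun S => ¬ IsTri S)).filter (fun S => ¬ S.card ≤ 2), g S|
        ≤ ∑ S ∈ (P.filter (fun S => ¬ IsTri S)).filter (fun S => ¬ S.card ≤ 2), |g S| :=
          Finset.abs_sum_le_sum_abs _ _
      _ ≤ ((P.filter (fun S => ¬ IsTri S)).filter (fun S => ¬ S.card ≤ 2)).card
            • (2 * (1/(n:ℝ))^3) := by
          refine Finset.sum_le_card_nsmul _ _ _ fun S hS => ?_
          rw [Finset.mem_filter, Finset.mem_filter, Finset.mem_powerset] at hS
          obtain ⟨⟨hSE, hnt⟩, hc2⟩ := hS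
          obtain ⟨hMc, hv3⟩ := Mc_big F hSE (by omega) hnt n
          have h1 : (Mc n S : ℝ) / (n:ℝ)^v ≤ (1/(n:ℝ))^3 := by
            rw [← hratio 3 hv3]
            gcongr
            exact_mod_cast hMc
          have h2 : ((1:ℝ)/(n:ℝ))^S.card ≤ (1/(n:ℝ))^3 :=
            pow_le_pow_of_le_one (by positivity) hn1 (by omega)
          have h3 : (0:ℝ) ≤ (Mc n S : ℝ) / (n:ℝ)^v := by positivity
          have h4 : (0:ℝ) ≤ ((1:ℝ)/(n:ℝ))^S.card := by positivity
          rw [hg]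
          simp only
          rw [abs_mul, abs_pow, abs_neg, abs_one, one_pow, one_mul]
          have habs : |(Mc n S : ℝ) / (n:ℝ)^v - (1/(n:ℝ))^S.card| ≤
              (Mc n S : ℝ) / (n:ℝ)^v + (1/(n:ℝ))^S.card :=
            abs_le.2 ⟨by linarith, by linarith⟩
          linarith
      _ ≤ 2 ^ F.edgeFinset.card * 2 * (1/(n:ℝ))^3 := by
          rw [nsmul_eq_mul]
          have hcard : ((P.filter (fun S => ¬ IsTri S)).filter (fun S => ¬ S.card ≤ 2)).card
              ≤ 2 ^ F.edgeFinset.card := by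
            calc _ ≤ P.card := Finset.card_le_card
                  ((Finset.filter_subset _ _).trans (Finset.filter_subset _ _))
              _ = 2 ^ F.edgeFinset.card := Finset.card_powerset _
          calc (((P.filter (fun S => ¬ IsTri S)).filter (fun S => ¬ S.card ≤ 2)).card : ℝ)
                * (2 * (1/(n:ℝ))^3)
              ≤ (2 ^ F.edgeFinset.card : ℝ) * (2 * (1/(n:ℝ))^3) := by
                gcongr
                exact_mod_cast hcard
            _ = 2 ^ F.edgeFinset.card * 2 * (1/(n:ℝ))^3 := by ring
  have hX : (Ac F n : ℝ) / (n:ℝ)^v - (1 - 1/(n:ℝ)) ^ F.edgeFinset.card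
      + ((F.cliqueFinset 3).card : ℝ) * ((1/(n:ℝ))^2 - (1/(n:ℝ))^3)
      = ∑ S ∈ (P.filter (fun S => ¬ IsTri S)).filter (fun S => ¬ S.card ≤ 2), g S := by
    rw [hdiff]
    have : ∑ S ∈ F.edgeFinset.powerset,
        (-1:ℝ)^S.card * ((Mc n S : ℝ)/(n:ℝ)^v - (1/(n:ℝ))^S.card) = ∑ S ∈ P, g S := rfl
    rw [this, ← hsplit1, ← hsplit2, hzero, htri]
    ring
  rw [hX]
  exact hrest

lemma homCount_tensor (n m : ℕ) (hm : 1 ≤ m) :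
    homCount F (tensorPow n m) = Ac F n ^ m := by
  rw [homCount, Ac]
  have Φ : (F →g tensorPow n m) ≃
      (Fin m → {f : V → Fin n // ∀ a b, F.Adj a b → f a ≠ f b}) := by
    refine ⟨fun h i => ⟨fun v => h v i, fun a b hab hEq => And.right (h.map_adj hab) i hEq⟩,
      fun g => ⟨fun v i => (g i).1 v, fun {a b} hab => And.intro (fun hEq =>
        (g ⟨0, hm⟩).2 a b hab (congrFun hEq ⟨0, hm⟩)) (fun i => (g i).2 a b hab)⟩, ?_, ?_⟩
    · intro h
      exact DFunLike.ext _ _ fun v => rfl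
    · intro g
      funext i
      exact Subtype.ext rfl
  rw [Nat.card_congr Φ, Nat.card_fun, Nat.card_eq_fintype_card, Nat.card_eq_fintype_card,
    Fintype.card_fin]

lemma main_tendsto :
    Tendsto (fun n : ℕ => (homCount F (tensorPow n (n ^ 2)) : ℝ) /
        (((1 - 1 / (n : ℝ)) ^ (n ^ 2)) ^ F.edgeFinset.card
          * ((n : ℝ) ^ (n ^ 2)) ^ (Fintype.card V)))
      atTop (nhds (Real.exp (-((F.cliqueFinset 3).card : ℝ)))) := by
  set v := Fintype.card V with hvdef
  set eC := F.edgeFinset.card with heC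
  set t : ℝ := ((F.cliqueFinset 3).card : ℝ) with ht
  set K : ℝ := 2 ^ eC * 2 with hK
  set q : ℕ → ℝ := fun n => (Ac F n : ℝ) / (n : ℝ) ^ v with hq
  set p : ℕ → ℝ := fun n => (1 - 1 / (n : ℝ)) ^ eC with hp
  set c : ℕ → ℝ := fun n => (1 / (n:ℝ)) ^ 2 - (1 / (n:ℝ)) ^ 3 with hc
  have h_inv : Tendsto (fun n : ℕ => 1 / (n:ℝ)) atTop (𝓝 0) :=
    tendsto_one_div_atTop_nhds_zero_nat
  have T_a : Tendsto (fun n : ℕ => 1 - 1 / (n:ℝ)) atTop (𝓝 1) := by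
    have := (tendsto_const_nhds (x := (1:ℝ)) (f := atTop (α := ℕ))).sub h_inv
    simpa using this
  have T_p : Tendsto p atTop (𝓝 1) := by
    have h := T_a.pow eC
    rwa [one_pow] at h
  -- n² * (q - p) → -t
  have T_err : Tendsto (fun n : ℕ => ((n:ℝ))^2 * ((q n - p n) + t * c n)) atTop (𝓝 0) := by
    have hb : Tendsto (fun n : ℕ => K * (1/(n:ℝ))) atTop (𝓝 0) := by
      have h := h_inv.const_mul K
      rwa [mul_zero] at h
    refine squeeze_zero_norm' ?_ hb
    filter_upwards [eventually_ge_atTop 1] with n hn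
    have hn0 : (0:ℝ) < (n:ℝ) := by exact_mod_cast hn
    have hkey := key_est F n hn
    rw [Real.norm_eq_abs, abs_mul, abs_pow, abs_of_pos hn0]
    calc (n:ℝ)^2 * |q n - p n + t * c n| ≤ (n:ℝ)^2 * (K * (1/(n:ℝ))^3) :=
          mul_le_mul_of_nonneg_left hkey (by positivity)
      _ = K * (1/(n:ℝ)) := by field_simp
  have T_c : Tendsto (fun n : ℕ => t * (((n:ℝ))^2 * c n)) atTop (𝓝 t) := by
    have hev : (fun n : ℕ => t * (1 - 1/(n:ℝ))) =ᶠ[atTop]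
        (fun n : ℕ => t * (((n:ℝ))^2 * c n)) := by
      filter_upwards [eventually_ge_atTop 1] with n hn
      have hn0 : ((n:ℝ)) ≠ 0 := by positivity
      rw [hc]
      field_simp
    have : Tendsto (fun n : ℕ => t * (1 - 1/(n:ℝ))) atTop (𝓝 (t * 1)) :=
      (T_a.const_mul t)
    rw [mul_one] at this
    exact this.congr' hev
  have T1 : Tendsto (fun n : ℕ => ((n:ℝ))^2 * (q n - p n)) atTop (𝓝 (-t)) := by
    have := T_err.sub T_c
    rw [zero_sub] at this
    apply this.congr
    intro n
    ring
  -- u n = (q n - p n)/p n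
  set u : ℕ → ℝ := fun n => (q n - p n) / p n with hu
  have T2 : Tendsto (fun n : ℕ => ((n:ℝ))^2 * u n) atTop (𝓝 (-t)) := by
    have := T1.div T_p one_ne_zero
    rw [div_one] at this
    apply this.congr
    intro n
    simp only [Pi.div_apply]
    rw [mul_div_assoc]
  have T3 : Tendsto u atTop (𝓝 0) := by
    have h2 : Tendsto (fun n : ℕ => (((n:ℝ))^2 * u n) * (1/(n:ℝ))^2) atTop (𝓝 (-t * 0)) :=
      T2.mul (by simpa using h_inv.pow 2)
    rw [mul_zero] at h2
    apply h2.congr'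
    filter_upwards [eventually_ge_atTop 1] with n hn
    have hn0 : ((n:ℝ)) ≠ 0 := by positivity
    field_simp
  set B : ℕ → ℝ := fun n => 1 + u n with hB
  have T_B : Tendsto B atTop (𝓝 1) := by
    have := (tendsto_const_nhds (x := (1:ℝ)) (f := atTop (α := ℕ))).add T3
    simpa using this
  have ev_Bpos : ∀ᶠ n : ℕ in atTop, (1:ℝ)/2 < B n :=
    T_B.eventually (eventually_gt_nhds (by norm_num))
  -- squeeze for L n := n² log (B n)
  have T_low : Tendsto (fun n : ℕ => (((n:ℝ))^2 * u n) / B n) atTop (𝓝 (-t)) := by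
    have := T2.div T_B one_ne_zero
    rw [div_one] at this
    exact this
  have T_L : Tendsto (fun n : ℕ => ((n:ℝ))^2 * Real.log (B n)) atTop (𝓝 (-t)) := by
    refine tendsto_of_tendsto_of_tendsto_of_le_of_le' T_low T2 ?_ ?_
    · filter_upwards [ev_Bpos] with n hBn
      have hB0 : (0:ℝ) < B n := lt_trans (by norm_num : (0:ℝ) < 1/2) hBn
      have hlog : 1 - 1 / B n ≤ Real.log (B n) := by
        have h1 := Real.log_le_sub_one_of_pos (inv_pos.2 hB0)
        rw [Real.log_inv] at h1
        rw [inv_eq_one_div] at h1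
        linarith
      have hub : u n / B n = 1 - 1 / B n := by
        have hBu : u n = B n - 1 := by rw [hB]; ring
        rw [hBu, sub_div, div_self hB0.ne']
      rw [← hub] at hlog
      calc ((n:ℝ))^2 * u n / B n = ((n:ℝ))^2 * (u n / B n) := by ring
        _ ≤ ((n:ℝ))^2 * Real.log (B n) :=
          mul_le_mul_of_nonneg_left hlog (by positivity)
    · filter_upwards [ev_Bpos] with n hBn
      have hB0 : (0:ℝ) < B n := lt_trans (by norm_num : (0:ℝ) < 1/2) hBn
      have hlog : Real.log (B n) ≤ B n - 1 := Real.log_le_sub_one_of_pos hB0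
      have hBu : B n = 1 + u n := rfl
      have : Real.log (B n) ≤ u n := by linarith
      exact mul_le_mul_of_nonneg_left this (by positivity)
  have T_exp : Tendsto (fun n : ℕ => Real.exp (((n:ℝ))^2 * Real.log (B n))) atTop
      (𝓝 (Real.exp (-t))) := (Real.continuous_exp.tendsto _).comp T_L
  -- identify the target sequence with exp (n² log B n) eventually
  apply T_exp.congr'
  filter_upwards [eventually_ge_atTop 2, ev_Bpos] with n hn2 hBn
  have hn1 : 1 ≤ n := by omega
  have hn0 : (0:ℝ) < (n:ℝ) := by exact_mod_cast hn1
  have hp_pos : 0 < p n := by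
    have h2 : (2:ℝ) ≤ (n:ℝ) := by exact_mod_cast hn2
    have : 1/(n:ℝ) ≤ 1/2 := by
      rw [div_le_div_iff₀ hn0 (by norm_num)]; linarith
    have : 0 < 1 - 1/(n:ℝ) := by linarith
    exact pow_pos this eC
  have hB0 : (0:ℝ) < B n := lt_trans (by norm_num : (0:ℝ) < 1/2) hBn
  have hBeq : B n = (Ac F n : ℝ) / ((n:ℝ)^v * p n) := by
    have hBn' : B n = 1 + ((Ac F n : ℝ) / (n:ℝ)^v - p n)/p n := rfl
    rw [hBn']
    field_simp
    ring
  have hhom : (homCount F (tensorPow n (n ^ 2)) : ℝ) = ((Ac F n : ℝ)) ^ (n ^ 2) := by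
    rw [homCount_tensor F n (n^2) (Nat.one_le_pow 2 n (by omega))]
    push_cast
    ring
  have hden : ((1 - 1 / (n : ℝ)) ^ (n ^ 2)) ^ eC * ((n : ℝ) ^ (n ^ 2)) ^ v
      = ((n:ℝ)^v * p n) ^ (n ^ 2) := by
    rw [pow_right_comm ((1:ℝ) - 1/(n:ℝ)) (n^2) eC, pow_right_comm ((n:ℝ)) (n^2) v, hp]
    rw [← mul_pow]
    ring
  have hfinal : (homCount F (tensorPow n (n ^ 2)) : ℝ) /
      (((1 - 1 / (n : ℝ)) ^ (n ^ 2)) ^ eC * ((n : ℝ) ^ (n ^ 2)) ^ v) = (B n) ^ (n ^ 2) := by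
    rw [hhom, hden, hBeq, div_pow]
  rw [hfinal, show ((n:ℝ))^2 * Real.log (B n) = ((n^2 : ℕ) : ℝ) * Real.log (B n) by
    push_cast; ring, ← Real.log_pow, Real.exp_log (pow_pos hB0 _)]

end NDTwork

/-- With `G_n = K_n^{⊗ n²}` and `p_n = (1 - 1/n)^{n²}`, the normalized homomorphism density
`hom(F, G_n) / (p_n^{e(F)} |G_n|^{|F|})` converges to `e^{-t}` where `t` is the number of
triangles of `F`. -/
theorem normalized_density_tendsto {V : Type*} [Fintype V] [DecidableEq V]
    (F : SimpleGraph V) [DecidableRel F.Adj] :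
    Tendsto (fun n : ℕ => (homCount F (tensorPow n (n ^ 2)) : ℝ) /
        (((1 - 1 / (n : ℝ)) ^ (n ^ 2)) ^ F.edgeFinset.card
          * ((n : ℝ) ^ (n ^ 2)) ^ (Fintype.card V)))
      atTop (nhds (Real.exp (-((F.cliqueFinset 3).card : ℝ)))) := by
  exact main_tendsto F
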